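/- arXiv:1603.07046 — 2 statements merged into one kernel-verified Lean document; each statement's English description precedes it below -/
import Mathlib

section
/- Let f be a signature of arity n whose support is an affine subspace of ℤ₂ⁿ of dimension k ≥ 4. If for every i ∈ {1,…,n} both restrictions f^{xᵢ=0} and f^{xᵢ=1} are affine, then f is affine. -/
/-- `𝔦^r` for `r ∈ ℤ₄`; well defined since `𝔦⁴ = 1`. -/
noncomputable def iPow (r : ZMod 4) : ℂ := Complex.I ^ r.val

/-- View `0, 1 ∈ ℤ₂` as elements of `ℤ₄`. -/
def z2z4 (a : ZMod 2) : ZMod 4 := (a.val : ZMod 4)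

/-- Evaluation at a `{0,1}`-point of the multilinear polynomial over `ℤ₄` whose
coefficient on the monomial `∏_{i ∈ S} xᵢ` is `c S`. -/
def evalML4 {ι : Type*} [Fintype ι] [DecidableEq ι]
    (c : Finset ι → ZMod 4) (x : ι → ZMod 2) : ZMod 4 :=
  ∑ S : Finset ι, c S * ∏ i ∈ S, z2z4 (x i)

/-- `x` extended by a final coordinate `1` (at `none`). -/
def extend1 {ι : Type*} (x : ι → ZMod 2) : Option ι → ZMod 2 := fun o => o.elim 1 x

/-- A signature is affine if it is `λ · χ_{A(x,1)ᵀ = 0} · 𝔦^{Q(x)}` for a matrix `A`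
over `ℤ₂` and a multilinear polynomial `Q` over `ℤ₄` of total degree at most 2
whose cross terms all have even coefficients. -/
def IsAffine {ι : Type*} [Fintype ι] [DecidableEq ι] (f : (ι → ZMod 2) → ℂ) : Prop :=
  ∃ (lam : ℂ) (m : ℕ) (A : Matrix (Fin m) (Option ι) (ZMod 2))
    (c : Finset ι → ZMod 4),
    (∀ S : Finset ι, 2 < S.card → c S = 0) ∧
    (∀ S : Finset ι, S.card = 2 → ∃ t : ZMod 4, c S = 2 * t) ∧
    ∀ x : ι → ZMod 2,
      f x = lam * (if A.mulVec (extend1 x) = 0 then 1 else 0) * iPow (evalML4 c x)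

/-- `f` has affine support of dimension `k`: its support is an affine subspace
of `ℤ₂ⁿ` (a coset of a linear subspace) of dimension `k`. -/
def HasAffineSupportDim {ι : Type*} [Fintype ι] (f : (ι → ZMod 2) → ℂ) (k : ℕ) : Prop :=
  ∃ (x₀ : ι → ZMod 2) (V : Submodule (ZMod 2) (ι → ZMod 2)),
    Module.finrank (ZMod 2) ↥V = k ∧ {x | f x ≠ 0} = {x | x + x₀ ∈ V}

-- ===== Auxiliary development =====

section iPowLemmas

lemma I_pow_mod4 (n : ℕ) : Complex.I ^ n = Complex.I ^ (n % 4) := by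
  conv_lhs => rw [← Nat.div_add_mod n 4]
  rw [pow_add, pow_mul, Complex.I_pow_four, one_pow, one_mul]

lemma iPow_add (r s : ZMod 4) : iPow (r + s) = iPow r * iPow s := by
  unfold iPow
  rw [← pow_add]
  have h : (r + s).val = (r.val + s.val) % 4 := ZMod.val_add r s
  rw [h, ← I_pow_mod4]

lemma iPow_ne_zero (r : ZMod 4) : iPow r ≠ 0 := pow_ne_zero _ Complex.I_ne_zero

lemma iPow_inj : Function.Injective iPow := by
  intro r s h
  have e4 : ∀ t : ZMod 4, t = 0 ∨ t = 1 ∨ t = 2 ∨ t = 3 := by decide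
  have v0 : (0 : ZMod 4).val = 0 := rfl
  have v1 : (1 : ZMod 4).val = 1 := rfl
  have v2 : (2 : ZMod 4).val = 2 := rfl
  have v3 : (3 : ZMod 4).val = 3 := rfl
  unfold iPow at h
  rcases e4 r with rfl | rfl | rfl | rfl <;> rcases e4 s with rfl | rfl | rfl | rfl <;>
    simp only [v0, v1, v2, v3] at h <;>
    first
      | rfl
      | (exfalso; revert h;
         simp [pow_succ, Complex.ext_iff]; try norm_num)

end iPowLemmas

section z2z4Lemmas

lemma z2z4_zero : z2z4 0 = 0 := rfl
lemma z2z4_one : z2z4 1 = 1 := rfl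
lemma z2z4_mul : ∀ a b : ZMod 2, z2z4 (a * b) = z2z4 a * z2z4 b := by decide
lemma z2z4_sq : ∀ a : ZMod 2, z2z4 a * z2z4 a = z2z4 a := by decide
lemma z2z4_flip : ∀ a : ZMod 2, z2z4 (a + 1) = 1 - z2z4 a := by decide
lemma z2z4_addF : ∀ a b : ZMod 2,
    z2z4 (a + b) = z2z4 a + z2z4 b + 2 * (z2z4 a * z2z4 b) := by decide
lemma two_z2z4_add : ∀ a b : ZMod 2, 2 * z2z4 (a + b) = 2 * z2z4 a + 2 * z2z4 b := by
  decide

/-- `a ↦ 2·z2z4 a` as an additive monoid hom. -/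
def phi2 : ZMod 2 →+ ZMod 4 where
  toFun a := 2 * z2z4 a
  map_zero' := by decide
  map_add' := by decide

end z2z4Lemmas

section MMachinery

variable {ι : Type*} [Fintype ι] [DecidableEq ι]

/-- Validity of a coefficient family: degree ≤ 2, even cross terms. -/
def ValidC (c : Finset ι → ZMod 4) : Prop :=
  (∀ S : Finset ι, 2 < S.card → c S = 0) ∧
  (∀ S : Finset ι, S.card = 2 → ∃ t : ZMod 4, c S = 2 * t)

def uu (b : ι) : (ι → ZMod 2) → ZMod 4 := fun x => z2z4 (x b)

def Mgen (ι : Type*) [Fintype ι] [DecidableEq ι] : Set ((ι → ZMod 2) → ZMod 4) :=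
  {F | F = fun _ => 1} ∪ {F | ∃ b, F = uu b} ∪
    {F | ∃ b b', F = fun x => 2 * (uu b x * uu b' x)}

def MM (ι : Type*) [Fintype ι] [DecidableEq ι] :
    Submodule (ZMod 4) ((ι → ZMod 2) → ZMod 4) :=
  Submodule.span (ZMod 4) (Mgen ι)

lemma evalML4_single (S₀ : Finset ι) (v : ZMod 4) (x : ι → ZMod 2) :
    evalML4 (fun T => if T = S₀ then v else 0) x = v * ∏ i ∈ S₀, z2z4 (x i) := by
  unfold evalML4
  rw [Finset.sum_eq_single S₀]
  · simp
  · intro T _ hT; simp [hT]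
  · intro h; exact absurd (Finset.mem_univ S₀) h

lemma mem_MM_repr {F : (ι → ZMod 2) → ZMod 4} (hF : F ∈ MM ι) :
    ∃ c : Finset ι → ZMod 4, ValidC c ∧ ∀ x, F x = evalML4 c x := by
  induction hF using Submodule.span_induction with
  | mem F hmem =>
    rcases hmem with (h1 | ⟨b, rfl⟩) | ⟨b, b', rfl⟩
    · refine ⟨fun T => if T = (∅ : Finset ι) then 1 else 0, ⟨?_, ?_⟩, ?_⟩
      · intro S hS; beta_reduce; rw [if_neg]; rintro rfl; simp at hS
      · intro S hS; beta_reduce; rw [if_neg]; · exact ⟨0, by ring⟩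
        rintro rfl; simp at hS
      · intro x; rw [h1, evalML4_single]; simp
    · refine ⟨fun T => if T = ({b} : Finset ι) then 1 else 0, ⟨?_, ?_⟩, ?_⟩
      · intro S hS; beta_reduce; rw [if_neg]; rintro rfl; simp at hS
      · intro S hS; beta_reduce; rw [if_neg]; · exact ⟨0, by ring⟩
        rintro rfl; simp at hS
      · intro x; rw [evalML4_single]; simp [uu]
    · by_cases hbb : b = b'
      · subst hbb
        refine ⟨fun T => if T = ({b} : Finset ι) then 2 else 0, ⟨?_, ?_⟩, ?_⟩
        · intro S hS; beta_reduce; rw [if_neg]; rintro rfl; simp at hS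
        · intro S hS; beta_reduce; rw [if_neg]; · exact ⟨0, by ring⟩
          rintro rfl; simp at hS
        · intro x; rw [evalML4_single]; simp [uu, z2z4_sq]; try ring
      · refine ⟨fun T => if T = ({b, b'} : Finset ι) then 2 else 0, ⟨?_, ?_⟩, ?_⟩
        · intro S hS; beta_reduce; rw [if_neg]; rintro rfl
          rw [Finset.card_pair hbb] at hS; omega
        · intro S _; beta_reduce; by_cases h : S = {b, b'}
          · exact ⟨1, by rw [if_pos h]; ring⟩
          · exact ⟨0, by rw [if_neg h]; ring⟩
        · intro x; rw [evalML4_single, Finset.prod_pair hbb]; rfl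
  | zero =>
    refine ⟨fun _ => 0, ⟨fun _ _ => rfl, fun _ _ => ⟨0, by ring⟩⟩, ?_⟩
    intro x; simp [evalML4]
  | add F G _ _ ihF ihG =>
    obtain ⟨c₁, hv₁, he₁⟩ := ihF
    obtain ⟨c₂, hv₂, he₂⟩ := ihG
    refine ⟨c₁ + c₂, ⟨?_, ?_⟩, ?_⟩
    · intro S hS; simp [hv₁.1 S hS, hv₂.1 S hS]
    · intro S hS
      obtain ⟨t₁, h₁⟩ := hv₁.2 S hS; obtain ⟨t₂, h₂⟩ := hv₂.2 S hS
      exact ⟨t₁ + t₂, by rw [Pi.add_apply, h₁, h₂]; ring⟩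
    · intro x
      simp only [Pi.add_apply, he₁ x, he₂ x, evalML4, Pi.add_apply, add_mul,
        Finset.sum_add_distrib]
  | smul a F _ ihF =>
    obtain ⟨c, hv, he⟩ := ihF
    refine ⟨a • c, ⟨?_, ?_⟩, ?_⟩
    · intro S hS; simp [hv.1 S hS]
    · intro S hS; obtain ⟨t, ht⟩ := hv.2 S hS
      exact ⟨a * t, by rw [Pi.smul_apply, ht, smul_eq_mul]; ring⟩
    · intro x
      simp only [Pi.smul_apply, he x, evalML4, smul_eq_mul, Finset.mul_sum]
      refine Finset.sum_congr rfl fun S _ => by ring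

/-- `z2z4` of an affine `ℤ₂`-functional is in `MM`. -/

lemma two_z2z4_prod_affine_mem (s₁ s₂ : Finset ι) (t₁ t₂ : ZMod 2) :
    (fun x : ι → ZMod 2 =>
      2 * z2z4 (((∑ b ∈ s₁, x b) + t₁) * ((∑ b ∈ s₂, x b) + t₂))) ∈ MM ι := by
  classical
  have key : (fun x : ι → ZMod 2 =>
        2 * z2z4 (((∑ b ∈ s₁, x b) + t₁) * ((∑ b ∈ s₂, x b) + t₂)))
      = (fun x => ∑ b ∈ s₁, ∑ b' ∈ s₂, 2 * (uu b x * uu b' x))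
        + ((fun x => ∑ b ∈ s₁, (2 * z2z4 t₂) * uu b x)
        + ((fun x => ∑ b' ∈ s₂, (2 * z2z4 t₁) * uu b' x)
        + (fun _ => 2 * z2z4 (t₁ * t₂)))) := by
    funext x
    have e1 : ((∑ b ∈ s₁, x b) + t₁) * ((∑ b ∈ s₂, x b) + t₂)
        = (∑ b ∈ s₁, ∑ b' ∈ s₂, x b * x b')
          + ((∑ b ∈ s₁, t₂ * x b) + ((∑ b' ∈ s₂, t₁ * x b') + t₁ * t₂)) := by
      rw [← Finset.sum_mul_sum, ← Finset.mul_sum, ← Finset.mul_sum]; ring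
    rw [e1]
    simp only [Pi.add_apply]
    rw [two_z2z4_add, two_z2z4_add, two_z2z4_add]
    have hphi : ∀ p : ZMod 2, 2 * z2z4 p = phi2 p := fun _ => rfl
    congr 1
    · rw [hphi, map_sum]
      refine Finset.sum_congr rfl fun b _ => ?_
      rw [map_sum]
      refine Finset.sum_congr rfl fun b' _ => ?_
      show 2 * z2z4 (x b * x b') = _
      rw [z2z4_mul]; rfl
    congr 1
    · rw [hphi, map_sum]
      refine Finset.sum_congr rfl fun b _ => ?_
      show 2 * z2z4 (t₂ * x b) = _
      rw [z2z4_mul]; show _ = 2 * z2z4 t₂ * z2z4 (x b); ring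
    congr 1
    · rw [hphi, map_sum]
      refine Finset.sum_congr rfl fun b' _ => ?_
      show 2 * z2z4 (t₁ * x b') = _
      rw [z2z4_mul]; show _ = 2 * z2z4 t₁ * z2z4 (x b'); ring
  rw [key]
  refine Submodule.add_mem _ ?_ (Submodule.add_mem _ ?_ (Submodule.add_mem _ ?_ ?_))
  · have : (fun x : ι → ZMod 2 => ∑ b ∈ s₁, ∑ b' ∈ s₂, 2 * (uu b x * uu b' x))
        = ∑ b ∈ s₁, ∑ b' ∈ s₂, (fun x => 2 * (uu b x * uu b' x)) := by
      funext x; rw [Finset.sum_apply]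
      exact Finset.sum_congr rfl fun b _ => by rw [Finset.sum_apply]
    rw [this]
    refine Submodule.sum_mem _ fun b _ => Submodule.sum_mem _ fun b' _ => ?_
    exact Submodule.subset_span (Or.inr ⟨b, b', rfl⟩)
  · have : (fun x : ι → ZMod 2 => ∑ b ∈ s₁, (2 * z2z4 t₂) * uu b x)
        = ∑ b ∈ s₁, (2 * z2z4 t₂) • uu b := by
      funext x; rw [Finset.sum_apply]
      exact Finset.sum_congr rfl fun b _ => rfl
    rw [this]
    exact Submodule.sum_mem _ fun b _ =>
      Submodule.smul_mem _ _ (Submodule.subset_span (Or.inl (Or.inr ⟨b, rfl⟩)))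
  · have : (fun x : ι → ZMod 2 => ∑ b' ∈ s₂, (2 * z2z4 t₁) * uu b' x)
        = ∑ b' ∈ s₂, (2 * z2z4 t₁) • uu b' := by
      funext x; rw [Finset.sum_apply]
      exact Finset.sum_congr rfl fun b _ => rfl
    rw [this]
    exact Submodule.sum_mem _ fun b _ =>
      Submodule.smul_mem _ _ (Submodule.subset_span (Or.inl (Or.inr ⟨b, rfl⟩)))
  · have : ((fun _ => 2 * z2z4 (t₁ * t₂)) : (ι → ZMod 2) → ZMod 4)
        = (2 * z2z4 (t₁ * t₂)) • ((fun _ => 1) : (ι → ZMod 2) → ZMod 4) := by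
      funext x; simp
    rw [this]
    exact Submodule.smul_mem _ _ (Submodule.subset_span (Or.inl (Or.inl rfl)))

lemma affine_z2z4_mem (s : Finset ι) (t : ZMod 2) :
    (fun x : ι → ZMod 2 => z2z4 ((∑ b ∈ s, x b) + t)) ∈ MM ι := by
  classical
  induction s using Finset.induction_on with
  | empty =>
    have : (fun x : ι → ZMod 2 => z2z4 ((∑ b ∈ (∅ : Finset ι), x b) + t))
        = (z2z4 t) • ((fun _ => 1) : (ι → ZMod 2) → ZMod 4) := by
      funext x; simp
    rw [this]
    exact Submodule.smul_mem _ _ (Submodule.subset_span (Or.inl (Or.inl rfl)))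
  | @insert b s' hb ih =>
    have key : (fun x : ι → ZMod 2 => z2z4 ((∑ b' ∈ insert b s', x b') + t))
        = (fun x => z2z4 (x b)) + (fun x => z2z4 ((∑ b' ∈ s', x b') + t))
          + (fun x => 2 * (z2z4 (x b) * z2z4 ((∑ b' ∈ s', x b') + t))) := by
      funext x
      rw [Finset.sum_insert hb, add_assoc, z2z4_addF]
      simp only [Pi.add_apply]
      try ring
    rw [key]
    refine Submodule.add_mem _ (Submodule.add_mem _ ?_ ih) ?_
    · exact Submodule.subset_span (Or.inl (Or.inr ⟨b, rfl⟩))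
    · have : (fun x : ι → ZMod 2 =>
          2 * (z2z4 (x b) * z2z4 ((∑ b' ∈ s', x b') + t)))
          = (fun x => 2 * z2z4 (((∑ b'' ∈ ({b} : Finset ι), x b'') + 0)
              * ((∑ b' ∈ s', x b') + t))) := by
        funext x
        rw [z2z4_mul, Finset.sum_singleton, add_zero]
      rw [this]
      exact two_z2z4_prod_affine_mem {b} s' 0 t

end MMachinery

section Composition

variable {α β : Type*} [Fintype α] [DecidableEq α] [Fintype β] [DecidableEq β]

lemma comp_affine_mem (c : Finset α → ZMod 4) (hc : ValidC c)
    (τ : (β → ZMod 2) → (α → ZMod 2))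
    (hτ : ∀ a, ∃ (s : Finset β) (t : ZMod 2), ∀ x, τ x a = (∑ b ∈ s, x b) + t) :
    (fun x => evalML4 c (τ x)) ∈ MM β := by
  classical
  choose s t hst using hτ
  have key : (fun x => evalML4 c (τ x))
      = ∑ S : Finset α, (fun x => c S * ∏ a ∈ S, z2z4 (τ x a)) := by
    funext x; rw [Finset.sum_apply]; rfl
  rw [key]
  refine Submodule.sum_mem _ fun S _ => ?_
  by_cases h3 : 2 < S.card
  · have : (fun x => c S * ∏ a ∈ S, z2z4 (τ x a))
        = (0 : (β → ZMod 2) → ZMod 4) := by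
      funext x; rw [hc.1 S h3]; simp
    rw [this]; exact Submodule.zero_mem _
  · push_neg at h3
    interval_cases h : S.card
    · obtain rfl : S = ∅ := Finset.card_eq_zero.mp h
      have : (fun x => c (∅ : Finset α) * ∏ a ∈ (∅ : Finset α), z2z4 (τ x a))
          = (c ∅) • ((fun _ => 1) : (β → ZMod 2) → ZMod 4) := by
        funext x; simp
      rw [this]
      exact Submodule.smul_mem _ _ (Submodule.subset_span (Or.inl (Or.inl rfl)))
    · obtain ⟨a, rfl⟩ := Finset.card_eq_one.mp h
      have : (fun x => c {a} * ∏ a' ∈ ({a} : Finset α), z2z4 (τ x a'))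
          = (c {a}) • (fun x : β → ZMod 2 => z2z4 ((∑ b ∈ s a, x b) + t a)) := by
        funext x; rw [Finset.prod_singleton, hst a x]; rfl
      rw [this]
      exact Submodule.smul_mem _ _ (affine_z2z4_mem (s a) (t a))
    · obtain ⟨a, a', haa, rfl⟩ := Finset.card_eq_two.mp h
      obtain ⟨t₀, ht₀⟩ := hc.2 {a, a'} h
      have : (fun x => c {a, a'} * ∏ a'' ∈ ({a, a'} : Finset α), z2z4 (τ x a''))
          = t₀ • (fun x : β → ZMod 2 =>
              2 * z2z4 (((∑ b ∈ s a, x b) + t a) * ((∑ b ∈ s a', x b) + t a'))) := by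
        funext x
        rw [Finset.prod_pair haa, hst a x, hst a' x, ht₀]
        show 2 * t₀ * (z2z4 _ * z2z4 _) = t₀ * (2 * z2z4 _)
        rw [z2z4_mul]; ring
      rw [this]
      exact Submodule.smul_mem _ _ (two_z2z4_prod_affine_mem _ _ _ _)

end Composition

section Derivatives

variable {ι : Type*} [Fintype ι] [DecidableEq ι]

def flipv (a : ι) (x : ι → ZMod 2) : ι → ZMod 2 := Function.update x a (x a + 1)

lemma flipv_apply_ne {a i : ι} (x : ι → ZMod 2) (h : i ≠ a) : flipv a x i = x i :=
  Function.update_of_ne h _ _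

lemma flipv_apply_same (a : ι) (x : ι → ZMod 2) : flipv a x a = x a + 1 :=
  Function.update_self _ _ _

def derivC (c : Finset ι → ZMod 4) (a : ι) : Finset ι → ZMod 4 :=
  fun S => if a ∈ S then 0 else c (insert a S)

def epsv (a : ι) (x : ι → ZMod 2) : ZMod 4 := 1 - 2 * z2z4 (x a)

lemma D1 (c : Finset ι → ZMod 4) (a : ι) (x : ι → ZMod 2) :
    evalML4 c (flipv a x) = evalML4 c x + epsv a x * evalML4 (derivC c a) x := by
  classical
  unfold evalML4
  rw [← Finset.sum_filter_add_sum_filter_not Finset.univ (fun S => a ∈ S)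
        (fun S => c S * ∏ i ∈ S, z2z4 (flipv a x i)),
      ← Finset.sum_filter_add_sum_filter_not Finset.univ (fun S => a ∈ S)
        (fun S => c S * ∏ i ∈ S, z2z4 (x i)),
      ← Finset.sum_filter_add_sum_filter_not Finset.univ (fun S => a ∈ S)
        (fun S => derivC c a S * ∏ i ∈ S, z2z4 (x i))]
  have hBB : ∑ S ∈ Finset.univ.filter (fun S => ¬ a ∈ S), c S * ∏ i ∈ S, z2z4 (flipv a x i)
      = ∑ S ∈ Finset.univ.filter (fun S => ¬ a ∈ S), c S * ∏ i ∈ S, z2z4 (x i) := by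
    refine Finset.sum_congr rfl fun S hS => ?_
    have haS : a ∉ S := (Finset.mem_filter.mp hS).2
    congr 1
    exact Finset.prod_congr rfl fun i hi => by rw [flipv_apply_ne x (fun h => haS (by rw [← h]; exact hi))]
  have hzero : ∑ S ∈ Finset.univ.filter (fun S => a ∈ S),
      derivC c a S * ∏ i ∈ S, z2z4 (x i) = 0 :=
    Finset.sum_eq_zero fun S hS => by
      have : a ∈ S := (Finset.mem_filter.mp hS).2
      simp [derivC, this]
  have hC : ∑ S ∈ Finset.univ.filter (fun S => ¬ a ∈ S),
        derivC c a S * ∏ i ∈ S, z2z4 (x i)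
      = ∑ S ∈ Finset.univ.filter (fun S => a ∈ S),
        c S * ∏ i ∈ S.erase a, z2z4 (x i) := by
    refine Finset.sum_bij' (fun S _ => insert a S) (fun S _ => S.erase a) ?_ ?_ ?_ ?_ ?_
    · intro S hS
      simp only [Finset.mem_filter, Finset.mem_univ, true_and] at *
      exact Finset.mem_insert_self a S
    · intro S hS
      simp only [Finset.mem_filter, Finset.mem_univ, true_and] at *
      exact Finset.notMem_erase a S
    · intro S hS
      have : a ∉ S := by simpa using (Finset.mem_filter.mp hS).2
      exact Finset.erase_insert this
    · intro S hS
      exact Finset.insert_erase (Finset.mem_filter.mp hS).2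
    · intro S hS
      have haS : a ∉ S := by simpa using (Finset.mem_filter.mp hS).2
      unfold derivC
      rw [if_neg haS, Finset.erase_insert haS]
  have hA' : ∑ S ∈ Finset.univ.filter (fun S => a ∈ S),
        c S * ∏ i ∈ S, z2z4 (flipv a x i)
      = ∑ S ∈ Finset.univ.filter (fun S => a ∈ S),
        (c S * (z2z4 (x a) * ∏ i ∈ S.erase a, z2z4 (x i))
          + epsv a x * (c S * ∏ i ∈ S.erase a, z2z4 (x i))) := by
    refine Finset.sum_congr rfl fun S hS => ?_
    have haS : a ∈ S := (Finset.mem_filter.mp hS).2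
    have h1 : ∏ i ∈ S, z2z4 (flipv a x i)
        = z2z4 (flipv a x a) * ∏ i ∈ S.erase a, z2z4 (flipv a x i) :=
      (Finset.mul_prod_erase S _ haS).symm
    have h2 : ∏ i ∈ S.erase a, z2z4 (flipv a x i) = ∏ i ∈ S.erase a, z2z4 (x i) :=
      Finset.prod_congr rfl fun i hi => by
        rw [flipv_apply_ne x (Finset.ne_of_mem_erase hi)]
    rw [h1, h2, flipv_apply_same, z2z4_flip]
    unfold epsv; ring
  have hA : ∑ S ∈ Finset.univ.filter (fun S => a ∈ S), c S * ∏ i ∈ S, z2z4 (x i)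
      = ∑ S ∈ Finset.univ.filter (fun S => a ∈ S),
        c S * (z2z4 (x a) * ∏ i ∈ S.erase a, z2z4 (x i)) := by
    refine Finset.sum_congr rfl fun S hS => ?_
    have haS : a ∈ S := (Finset.mem_filter.mp hS).2
    rw [← Finset.mul_prod_erase S _ haS]
  rw [hBB, hzero, hC, hA', hA, Finset.sum_add_distrib, ← Finset.mul_sum]
  ring

lemma derivC_derivC {c : Finset ι → ZMod 4} (hc : ValidC c) {a b : ι} (hab : a ≠ b) :
    derivC (derivC c a) b = fun S => if S = ∅ then c {a, b} else 0 := by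
  classical
  funext S
  by_cases hbS : b ∈ S
  · have hSne : S ≠ ∅ := fun h => by subst h; simp at hbS
    simp [derivC, hbS, hSne]
  · by_cases haS : a ∈ S
    · have hSne : S ≠ ∅ := fun h => by subst h; simp at haS
      have : a ∈ insert b S := Finset.mem_insert_of_mem haS
      simp [derivC, hbS, this, hSne]
    · by_cases hSe : S = ∅
      · subst hSe
        simp [derivC, hab]
      · have hain : a ∉ insert b S := by
          simp only [Finset.mem_insert]; push_neg; exact ⟨hab, haS⟩
        have hcard : 2 < (insert a (insert b S)).card := by
          rw [Finset.card_insert_of_notMem hain, Finset.card_insert_of_notMem hbS]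
          have : 0 < S.card := Finset.card_pos.mpr (Finset.nonempty_of_ne_empty hSe)
          omega
        simp only [derivC, hbS, if_neg, hain]
        simp [hc.1 _ hcard, hSe]

lemma eval_derivC2 {c : Finset ι → ZMod 4} (hc : ValidC c) {a b : ι} (hab : a ≠ b)
    (x : ι → ZMod 2) : evalML4 (derivC (derivC c a) b) x = c {a, b} := by
  rw [derivC_derivC hc hab, evalML4_single]
  simp

lemma DD {c : Finset ι → ZMod 4} (hc : ValidC c) {a b : ι} (hab : a ≠ b)
    (x : ι → ZMod 2) :
    evalML4 c (flipv a (flipv b x)) + evalML4 c x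
      = evalML4 c (flipv a x) + evalML4 c (flipv b x)
        + epsv a x * epsv b x * c {a, b} := by
  have h1 := D1 c a (flipv b x)
  have h2 := D1 (derivC c a) b x
  have h3 := D1 c a x
  have heps : epsv a (flipv b x) = epsv a x := by
    unfold epsv; rw [flipv_apply_ne x hab]
  rw [h1, heps, h2, eval_derivC2 hc hab, h3]
  ring

lemma ALG2' {c : Finset ι → ZMod 4} (hc : ValidC c) {a b : ι} (hab : a ≠ b)
    (x : ι → ZMod 2) :
    ∃ t : ZMod 4, evalML4 c (flipv a (flipv b x)) + evalML4 c x
      = 2 * t + (evalML4 c (flipv a x) + evalML4 c (flipv b x)) := by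
  obtain ⟨t₀, ht₀⟩ := hc.2 {a, b} (Finset.card_pair hab)
  refine ⟨t₀ * (epsv a x * epsv b x), ?_⟩
  rw [DD hc hab, ht₀]; ring

lemma ALG3' {c : Finset ι → ZMod 4} (hc : ValidC c) {a b p : ι}
    (hab : a ≠ b) (hap : a ≠ p) (hbp : b ≠ p) (x : ι → ZMod 2) :
    evalML4 c x + evalML4 c (flipv a (flipv b x)) + evalML4 c (flipv a (flipv p x))
        + evalML4 c (flipv b (flipv p x))
      = evalML4 c (flipv a x) + evalML4 c (flipv b x) + evalML4 c (flipv p x)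
        + evalML4 c (flipv a (flipv b (flipv p x))) := by
  have h1 := DD hc hab x
  have h2 := DD hc hab (flipv p x)
  have e1 : epsv a (flipv p x) = epsv a x := by unfold epsv; rw [flipv_apply_ne x hap]
  have e2 : epsv b (flipv p x) = epsv b x := by unfold epsv; rw [flipv_apply_ne x hbp]
  rw [e1, e2] at h2
  linear_combination h1 - h2

end Derivatives

section FinHelpers

variable {m : ℕ}

lemma update_insertNth_succAbove (d : Fin (m + 1)) (b : ZMod 2) (z : Fin m → ZMod 2)
    (j : Fin m) (v : ZMod 2) :
    Function.update (d.insertNth b z) (d.succAbove j) v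
      = Fin.insertNth (α := fun _ => ZMod 2) d b (Function.update z j v) := by
  funext q
  refine Fin.succAboveCases d ?_ ?_ q
  · rw [Function.update_of_ne (Fin.succAbove_ne d j).symm, Fin.insertNth_apply_same,
      Fin.insertNth_apply_same]
  · intro p
    by_cases hpj : p = j
    · subst hpj
      rw [Function.update_self, Fin.insertNth_apply_succAbove, Function.update_self]
    · rw [Function.update_of_ne (fun h => hpj (Fin.succAbove_right_injective h)),
        Fin.insertNth_apply_succAbove, Fin.insertNth_apply_succAbove,
        Function.update_of_ne hpj]

lemma update_insertNth_same (d : Fin (m + 1)) (b : ZMod 2) (z : Fin m → ZMod 2)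
    (v : ZMod 2) :
    Function.update (d.insertNth b z) d v = Fin.insertNth (α := fun _ => ZMod 2) d v z := by
  funext q
  refine Fin.succAboveCases d ?_ ?_ q
  · rw [Function.update_self, Fin.insertNth_apply_same]
  · intro p
    rw [Function.update_of_ne (Fin.succAbove_ne d p), Fin.insertNth_apply_succAbove,
      Fin.insertNth_apply_succAbove]

lemma flipv_insertNth_succAbove (d : Fin (m + 1)) (b : ZMod 2) (z : Fin m → ZMod 2)
    (j : Fin m) :
    flipv (d.succAbove j) (d.insertNth b z) = Fin.insertNth (α := fun _ => ZMod 2) d b (flipv j z) := by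
  unfold flipv
  rw [Fin.insertNth_apply_succAbove, update_insertNth_succAbove]

lemma flipv_insertNth_same (d : Fin (m + 1)) (b : ZMod 2) (z : Fin m → ZMod 2) :
    flipv d (d.insertNth b z) = Fin.insertNth (α := fun _ => ZMod 2) d (b + 1) z := by
  unfold flipv
  rw [Fin.insertNth_apply_same, update_insertNth_same]

end FinHelpers

section SubstLemma

variable {α β : Type*} [Fintype α] [DecidableEq α] [Fintype β] [DecidableEq β]

lemma IsAffine.comp_affine {h : (α → ZMod 2) → ℂ} (hh : IsAffine h)
    (τ : (β → ZMod 2) → (α → ZMod 2))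
    (hτ : ∀ a, ∃ (s : Finset β) (t : ZMod 2), ∀ x, τ x a = (∑ b ∈ s, x b) + t) :
    IsAffine (fun x => h (τ x)) := by
  classical
  obtain ⟨lam, m, A, c, hdeg, hev, hrep⟩ := hh
  choose s t hst using hτ
  set E : Matrix (Option α) (Option β) (ZMod 2) := fun oa ob =>
    match oa, ob with
    | some a, some b => if b ∈ s a then 1 else 0
    | some a, none => t a
    | none, some _ => 0
    | none, none => 1
    with hEdef
  have hE : ∀ x, extend1 (τ x) = E.mulVec (extend1 x) := by
    intro x; funext o
    cases o with
    | none =>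
      show (1 : ZMod 2) = _
      simp [Matrix.mulVec, dotProduct, Fintype.sum_option, hEdef, extend1]
    | some a =>
      show τ x a = _
      rw [hst a x]
      simp only [Matrix.mulVec, dotProduct, Fintype.sum_option, hEdef, extend1]
      have : ∀ b : β, (if b ∈ s a then (1 : ZMod 2) else 0) * x b
          = if b ∈ s a then x b else 0 := by
        intro b; by_cases hb : b ∈ s a <;> simp [hb]
      simp only [Option.elim, this, mul_one]
      rw [Finset.sum_ite_mem, Finset.univ_inter]
      exact add_comm _ _
  have hmem := comp_affine_mem c ⟨hdeg, hev⟩ τ (fun a => ⟨s a, t a, hst a⟩)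
  obtain ⟨c', hc', hrep'⟩ := mem_MM_repr hmem
  refine ⟨lam, m, A * E, c', hc'.1, hc'.2, ?_⟩
  intro x
  have h1 : (A * E).mulVec (extend1 x) = A.mulVec (extend1 (τ x)) := by
    rw [hE, Matrix.mulVec_mulVec]
  have h2 := hrep' x
  beta_reduce at h2
  beta_reduce
  rw [h1, hrep (τ x), h2]

end SubstLemma

section FullSupport

lemma iPow_zero : iPow 0 = 1 := by
  show Complex.I ^ (0 : ZMod 4).val = 1
  norm_num

set_option maxHeartbeats 1000000 in
lemma fullSupport (m : ℕ) (hm : 3 ≤ m) (g : (Fin (m + 1) → ZMod 2) → ℂ)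
    (hg : ∀ x, g x ≠ 0)
    (hp : ∀ (i : Fin (m + 1)) (b : ZMod 2),
      IsAffine fun y : Fin m → ZMod 2 => g (i.insertNth b y)) :
    ∃ (lam : ℂ) (c : Finset (Fin (m + 1)) → ZMod 4),
      ValidC c ∧ ∀ x, g x = lam * iPow (evalML4 c x) := by
  classical
  have h2cases : ∀ a : ZMod 2, a = 0 ∨ a = 1 := by decide
  -- extract indicator-free pinning representations
  have hp' : ∀ (d : Fin (m + 1)) (b : ZMod 2),
      ∃ (lam : ℂ) (c : Finset (Fin m) → ZMod 4), lam ≠ 0 ∧ ValidC c ∧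
        ∀ y, g (d.insertNth b y) = lam * iPow (evalML4 c y) := by
    intro d b
    obtain ⟨lam, mm, A, c, h1, h2, h3⟩ := hp d b
    have hrep : ∀ y, g (d.insertNth b y) = lam * iPow (evalML4 c y) := by
      intro y
      have h3y := h3 y
      beta_reduce at h3y
      by_cases hcond : A.mulVec (extend1 y) = 0
      · rw [h3y, if_pos hcond, mul_one]
      · exfalso; exact hg (d.insertNth b y) (by rw [h3y, if_neg hcond]; ring)
    refine ⟨lam, c, ?_, ⟨h1, h2⟩, hrep⟩
    intro h0
    exact hg (d.insertNth b (fun _ => 0)) (by rw [hrep, h0, zero_mul])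
  choose LAM CC hLAM hVC hREP using hp'
  -- finding a coordinate avoiding three given ones
  have hpick3 : ∀ a b p : Fin (m + 1), ∃ d, d ≠ a ∧ d ≠ b ∧ d ≠ p := by
    intro a b p
    by_contra hcon
    push_neg at hcon
    have hsub : (Finset.univ : Finset (Fin (m + 1))) ⊆ {a, b, p} := by
      intro d _
      simp only [Finset.mem_insert, Finset.mem_singleton]
      by_cases h1 : d = a
      · exact Or.inl h1
      by_cases h2 : d = b
      · exact Or.inr (Or.inl h2)
      exact Or.inr (Or.inr (hcon d h1 h2))
    have hcard := Finset.card_le_card hsub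
    rw [Finset.card_univ, Fintype.card_fin] at hcard
    have h3 : ({a, b, p} : Finset (Fin (m + 1))).card ≤ 3 := by
      refine (Finset.card_insert_le _ _).trans ?_
      have := (Finset.card_insert_le b ({p} : Finset (Fin (m + 1))))
      simp only [Finset.card_singleton] at this ⊢
      omega
    omega
  -- G3 : the octuple identity
  have G3 : ∀ (x : Fin (m + 1) → ZMod 2) (a b p : Fin (m + 1)),
      a ≠ b → a ≠ p → b ≠ p →
      g x * g (flipv a (flipv b x)) * (g (flipv a (flipv p x)) * g (flipv b (flipv p x)))
        = g (flipv a x) * g (flipv b x)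
            * (g (flipv p x) * g (flipv a (flipv b (flipv p x)))) := by
    intro x a b p hab hap hbp
    obtain ⟨d, hda, hdb, hdp⟩ := hpick3 a b p
    obtain ⟨a', ha'⟩ := Fin.exists_succAbove_eq (Ne.symm hda)
    obtain ⟨b', hb'⟩ := Fin.exists_succAbove_eq (Ne.symm hdb)
    obtain ⟨p', hq'⟩ := Fin.exists_succAbove_eq (Ne.symm hdp)
    have hab' : a' ≠ b' := fun h => hab (by rw [← ha', ← hb', h])
    have hap' : a' ≠ p' := fun h => hap (by rw [← ha', ← hq', h])
    have hbp' : b' ≠ p' := fun h => hbp (by rw [← hb', ← hq', h])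
    have hx : x = d.insertNth (x d) (d.removeNth x) := (Fin.insertNth_self_removeNth d x).symm
    rw [← ha', ← hb', ← hq', hx]
    simp only [flipv_insertNth_succAbove]
    simp only [hREP d (x d)]
    have key : ∀ r1 r2 r3 r4 : ZMod 4,
        LAM d (x d) * iPow r1 * (LAM d (x d) * iPow r2)
          * (LAM d (x d) * iPow r3 * (LAM d (x d) * iPow r4))
        = LAM d (x d) ^ 4 * iPow (r1 + r2 + (r3 + r4)) := by
      intro r1 r2 r3 r4
      rw [iPow_add, iPow_add, iPow_add]; ring
    rw [key, key]
    congr 1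
    have := ALG3' (hVC d (x d)) hab' hap' hbp' (d.removeNth x)
    congr 1
    linear_combination this
  -- G2 : second difference is even
  have G2 : ∀ (x : Fin (m + 1) → ZMod 2) (a b : Fin (m + 1)), a ≠ b →
      ∃ t : ZMod 4, g (flipv a (flipv b x)) * g x
        = iPow (2 * t) * (g (flipv a x) * g (flipv b x)) := by
    intro x a b hab
    obtain ⟨d, hda, hdb, _⟩ := hpick3 a b b
    obtain ⟨a', ha'⟩ := Fin.exists_succAbove_eq (Ne.symm hda)
    obtain ⟨b', hb'⟩ := Fin.exists_succAbove_eq (Ne.symm hdb)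
    have hab' : a' ≠ b' := fun h => hab (by rw [← ha', ← hb', h])
    have hx : x = d.insertNth (x d) (d.removeNth x) := (Fin.insertNth_self_removeNth d x).symm
    obtain ⟨t, ht⟩ := ALG2' (hVC d (x d)) hab' (d.removeNth x)
    refine ⟨t, ?_⟩
    rw [← ha', ← hb', hx]
    simp only [flipv_insertNth_succAbove]
    simp only [hREP d (x d)]
    have key : ∀ r1 r2 : ZMod 4, LAM d (x d) * iPow r1 * (LAM d (x d) * iPow r2)
        = LAM d (x d) ^ 2 * iPow (r1 + r2) := by
      intro r1 r2; rw [iPow_add]; ring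
    rw [key, key, ht, iPow_add]
    ring
  -- G1 : single flips change g by a power of i
  have G1 : ∀ (x : Fin (m + 1) → ZMod 2) (a : Fin (m + 1)),
      ∃ r : ZMod 4, g (flipv a x) = iPow r * g x := by
    intro x a
    obtain ⟨d, hda, _, _⟩ := hpick3 a a a
    obtain ⟨a', ha'⟩ := Fin.exists_succAbove_eq (Ne.symm hda)
    have hx : x = d.insertNth (x d) (d.removeNth x) := (Fin.insertNth_self_removeNth d x).symm
    have e0 : g x = LAM d (x d) * iPow (evalML4 (CC d (x d)) (d.removeNth x)) := by
      conv_lhs => rw [hx]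
      exact hREP d (x d) _
    have e1 : g (flipv a x)
        = LAM d (x d) * iPow (evalML4 (CC d (x d)) (flipv a' (d.removeNth x))) := by
      conv_lhs => rw [← ha', hx, flipv_insertNth_succAbove]
      exact hREP d (x d) _
    refine ⟨evalML4 (CC d (x d)) (flipv a' (d.removeNth x))
      - evalML4 (CC d (x d)) (d.removeNth x), ?_⟩
    rw [e0, e1, show evalML4 (CC d (x d)) (flipv a' (d.removeNth x))
      = (evalML4 (CC d (x d)) (flipv a' (d.removeNth x))
          - evalML4 (CC d (x d)) (d.removeNth x)) + evalML4 (CC d (x d)) (d.removeNth x)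
      by ring, iPow_add]
    ring
  -- ===== merge the two pinnings at coordinate 0 =====
  have hrep0 := hREP (0 : Fin (m + 1)) 0
  have hrep1 := hREP (0 : Fin (m + 1)) 1
  set L0 := LAM (0 : Fin (m + 1)) 0 with hL0
  set L1 := LAM (0 : Fin (m + 1)) 1 with hL1
  set E0 := evalML4 (CC (0 : Fin (m + 1)) 0) with hE0
  set E1 := evalML4 (CC (0 : Fin (m + 1)) 1) with hE1
  have hL0ne : L0 ≠ 0 := hLAM _ _
  have hL1ne : L1 ≠ 0 := hLAM _ _
  set zv : Fin m → ZMod 2 := fun _ => 0 with hzv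
  -- second difference of the phase difference vanishes
  have M1 : ∀ (y : Fin m → ZMod 2) (j l : Fin m), j ≠ l →
      (E1 (flipv j (flipv l y)) - E0 (flipv j (flipv l y))) + (E1 y - E0 y)
        = (E1 (flipv j y) - E0 (flipv j y)) + (E1 (flipv l y) - E0 (flipv l y)) := by
    intro y j l hjl
    have hG := G3 ((0 : Fin (m + 1)).insertNth 0 y) 0
      ((0 : Fin (m + 1)).succAbove j) ((0 : Fin (m + 1)).succAbove l)
      (Ne.symm (Fin.succAbove_ne 0 j)) (Ne.symm (Fin.succAbove_ne 0 l))
      (fun h => hjl (Fin.succAbove_right_injective h))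
    simp only [flipv_insertNth_succAbove, flipv_insertNth_same, zero_add] at hG
    simp only [hrep0, hrep1] at hG
    have hpr1 : ∀ r1 r2 r3 r4 : ZMod 4,
        (L0 * iPow r1) * (L1 * iPow r2) * ((L1 * iPow r3) * (L0 * iPow r4))
          = (L0 * L0 * (L1 * L1)) * iPow (r1 + r2 + (r3 + r4)) := by
      intro r1 r2 r3 r4; rw [iPow_add, iPow_add, iPow_add]; ring
    have hpr2 : ∀ r1 r2 r3 r4 : ZMod 4,
        (L1 * iPow r1) * (L0 * iPow r2) * ((L0 * iPow r3) * (L1 * iPow r4))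
          = (L0 * L0 * (L1 * L1)) * iPow (r1 + r2 + (r3 + r4)) := by
      intro r1 r2 r3 r4; rw [iPow_add, iPow_add, iPow_add]; ring
    rw [hpr1, hpr2] at hG
    have hcan : (L0 * L0 * (L1 * L1)) ≠ 0 :=
      mul_ne_zero (mul_ne_zero hL0ne hL0ne) (mul_ne_zero hL1ne hL1ne)
    have hsum := iPow_inj (mul_left_cancel₀ hcan hG)
    linear_combination - hsum
  -- the linear coefficients are even
  set cj : Fin m → ZMod 4 := fun j =>
    (E1 (flipv j zv) - E0 (flipv j zv)) - (E1 zv - E0 zv) with hcj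
  have M3 : ∀ j : Fin m, ∃ t : ZMod 4, cj j = 2 * t := by
    intro j
    obtain ⟨t, hG⟩ := G2 ((0 : Fin (m + 1)).insertNth 0 zv) 0
      ((0 : Fin (m + 1)).succAbove j) (Ne.symm (Fin.succAbove_ne 0 j))
    simp only [flipv_insertNth_succAbove, flipv_insertNth_same, zero_add] at hG
    simp only [hrep0, hrep1] at hG
    have hpr : ∀ r1 r2 : ZMod 4, (L1 * iPow r1) * (L0 * iPow r2)
        = (L0 * L1) * iPow (r1 + r2) := by
      intro r1 r2; rw [iPow_add]; ring
    rw [hpr, hpr] at hG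
    have hcan : (L0 * L1) ≠ 0 := mul_ne_zero hL0ne hL1ne
    have hG' : (L0 * L1) * iPow (evalML4 (CC 0 1) (flipv j zv) + evalML4 (CC 0 0) zv)
        = (L0 * L1) * iPow (2 * t + (evalML4 (CC 0 1) zv + evalML4 (CC 0 0) (flipv j zv))) := by
      rw [iPow_add (2*t)]
      rw [hG]; ring
    have hsum := iPow_inj (mul_left_cancel₀ hcan hG')
    refine ⟨t, ?_⟩
    rw [hcj]
    linear_combination hsum
  -- ratio of the two pinning constants is a power of i
  have M4 : ∃ μ : ZMod 4, L1 = L0 * iPow μ := by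
    obtain ⟨r, hr⟩ := G1 ((0 : Fin (m + 1)).insertNth 0 zv) 0
    simp only [flipv_insertNth_same, zero_add] at hr
    simp only [hrep0, hrep1] at hr
    refine ⟨r + (E0 zv - E1 zv), ?_⟩
    have goal' : L1 * iPow (E1 zv) = (L0 * iPow (r + (E0 zv - E1 zv))) * iPow (E1 zv) := by
      rw [hr]
      have harg : r + (E0 zv - E1 zv) + E1 zv = r + E0 zv := by ring
      rw [mul_assoc, ← iPow_add, harg, iPow_add]
      ring
    exact mul_right_cancel₀ (iPow_ne_zero _) goal'
  obtain ⟨μ, hμ⟩ := M4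
  -- structure of the phase difference: indicator functions of finsets
  have hindF : ∀ (s : Finset (Fin m)) (l : Fin m), l ∉ s →
      (fun p => if p ∈ insert l s then (1 : ZMod 2) else 0)
        = flipv l (fun p => if p ∈ s then (1 : ZMod 2) else 0) := by
    intro s l hl
    funext p
    by_cases hp : p = l
    · subst hp
      rw [flipv_apply_same, if_pos (Finset.mem_insert_self p s), if_neg hl, zero_add]
    · rw [flipv_apply_ne _ hp]
      simp [Finset.mem_insert, hp]
  have CONST : ∀ (s : Finset (Fin m)) (j : Fin m), j ∉ s →
      (E1 (flipv j (fun p => if p ∈ s then 1 else 0))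
        - E0 (flipv j (fun p => if p ∈ s then 1 else 0)))
      = (E1 (fun p => if p ∈ s then 1 else 0)
        - E0 (fun p => if p ∈ s then 1 else 0)) + cj j := by
    intro s
    induction s using Finset.induction_on with
    | empty =>
      intro j _
      have hz : (fun p : Fin m => if p ∈ (∅ : Finset (Fin m)) then (1 : ZMod 2) else 0) = zv := by
        funext p; simp [hzv]
      rw [hz, hcj]
      ring
    | @insert l s' hl ih =>
      intro j hj
      have hjl : j ≠ l := fun h => hj (h ▸ Finset.mem_insert_self l s')
      have hjs' : j ∉ s' := fun h => hj (Finset.mem_insert_of_mem h)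
      rw [hindF s' l hl]
      have hM := M1 (fun p => if p ∈ s' then (1:ZMod 2) else 0) j l hjl
      have hih := ih j hjs'
      linear_combination hM + hih
  have SUMF : ∀ s : Finset (Fin m),
      E1 (fun p => if p ∈ s then 1 else 0) - E0 (fun p => if p ∈ s then 1 else 0)
        = (E1 zv - E0 zv) + ∑ j ∈ s, cj j := by
    intro s
    induction s using Finset.induction_on with
    | empty =>
      have hz : (fun p : Fin m => if p ∈ (∅ : Finset (Fin m)) then (1 : ZMod 2) else 0) = zv := by
        funext p; simp [hzv]
      rw [hz, Finset.sum_empty]; ring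
    | @insert l s' hl ih =>
      rw [hindF s' l hl, Finset.sum_insert hl, CONST s' l hl, ih]
      ring
  have DFORM : ∀ y : Fin m → ZMod 2,
      E1 y - E0 y = (E1 zv - E0 zv) + ∑ j : Fin m, z2z4 (y j) * cj j := by
    intro y
    have hy : y = (fun p => if p ∈ Finset.univ.filter (fun j => y j = 1) then (1 : ZMod 2) else 0) := by
      funext p
      rcases h2cases (y p) with h | h
      · rw [h]; simp [h]
      · rw [h]; simp [h]
    conv_lhs => rw [hy]
    rw [SUMF]
    congr 1
    rw [Finset.sum_filter]
    refine Finset.sum_congr rfl fun j _ => ?_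
    rcases h2cases (y j) with h | h
    · rw [h, if_neg (by simp : ¬ (0:ZMod 2) = 1), z2z4_zero, zero_mul]
    · rw [h, if_pos rfl, z2z4_one, one_mul]
  choose tt htt using M3
  -- global representation
  set ν : ZMod 4 := μ + (E1 zv - E0 zv) with hν
  set Φ : (Fin (m + 1) → ZMod 2) → ZMod 4 := fun x =>
    E0 ((0 : Fin (m + 1)).removeNth x)
      + z2z4 (x 0) * (ν + ∑ j : Fin m, z2z4 (((0 : Fin (m + 1)).removeNth x) j) * cj j)
    with hΦ
  have REP : ∀ x, g x = L0 * iPow (Φ x) := by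
    intro x
    have hx : (0 : Fin (m + 1)).insertNth (x 0) ((0 : Fin (m + 1)).removeNth x) = x :=
      Fin.insertNth_self_removeNth 0 x
    have hΦx : Φ x = E0 ((0 : Fin (m + 1)).removeNth x)
        + z2z4 (x 0) * (ν + ∑ j : Fin m,
            z2z4 (((0 : Fin (m + 1)).removeNth x) j) * cj j) := by
      rw [hΦ]
    rcases h2cases (x 0) with h0 | h0
    · have hgx : g x = L0 * iPow (E0 ((0 : Fin (m + 1)).removeNth x)) := by
        conv_lhs => rw [← hx, h0]
        exact hrep0 _
      rw [hgx]
      congr 2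
      rw [hΦx, h0, z2z4_zero]
      ring
    · have hgx : g x = L1 * iPow (E1 ((0 : Fin (m + 1)).removeNth x)) := by
        conv_lhs => rw [← hx, h0]
        exact hrep1 _
      rw [hgx, hμ, mul_assoc, ← iPow_add]
      congr 2
      rw [hΦx, h0, z2z4_one, one_mul, hν]
      have := DFORM ((0 : Fin (m + 1)).removeNth x)
      linear_combination this
  -- membership of the phase function in MM
  have hmem : Φ ∈ MM (Fin (m + 1)) := by
    have h1 : (fun x : Fin (m + 1) → ZMod 2 =>
        evalML4 (CC (0 : Fin (m + 1)) 0) ((0 : Fin (m + 1)).removeNth x)) ∈ MM (Fin (m + 1)) := by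
      refine comp_affine_mem _ (hVC 0 0) _ (fun j => ⟨{(0 : Fin (m + 1)).succAbove j}, 0, fun x => ?_⟩)
      rw [Finset.sum_singleton, add_zero]
      rfl
    have h2 : (ν • uu (0 : Fin (m + 1))) ∈ MM (Fin (m + 1)) :=
      Submodule.smul_mem _ _ (Submodule.subset_span (Or.inl (Or.inr ⟨0, rfl⟩)))
    have h3 : (∑ j : Fin m, tt j • (fun x : Fin (m + 1) → ZMod 2 =>
        2 * (uu (0 : Fin (m + 1)) x * uu ((0 : Fin (m + 1)).succAbove j) x)))
        ∈ MM (Fin (m + 1)) :=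
      Submodule.sum_mem _ fun j _ => Submodule.smul_mem _ _
        (Submodule.subset_span (Or.inr ⟨0, (0 : Fin (m + 1)).succAbove j, rfl⟩))
    have hΦeq : Φ = (fun x : Fin (m + 1) → ZMod 2 =>
        evalML4 (CC (0 : Fin (m + 1)) 0) ((0 : Fin (m + 1)).removeNth x))
        + ((ν • uu (0 : Fin (m + 1)))
          + ∑ j : Fin m, tt j • (fun x : Fin (m + 1) → ZMod 2 =>
              2 * (uu (0 : Fin (m + 1)) x * uu ((0 : Fin (m + 1)).succAbove j) x))) := by
      funext x
      simp only [hΦ, Pi.add_apply, Pi.smul_apply, Finset.sum_apply, smul_eq_mul]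
      rw [← hE0]
      congr 1
      rw [mul_add, Finset.mul_sum]
      congr 1
      · show z2z4 (x 0) * ν = ν * uu (0 : Fin (m+1)) x
        rw [uu]; ring
      · refine Finset.sum_congr rfl fun j _ => ?_
        rw [htt j]
        show z2z4 (x 0) * (z2z4 (x ((0 : Fin (m+1)).succAbove j)) * (2 * tt j)) = _
        rw [uu, uu]
        ring
    rw [hΦeq]
    exact Submodule.add_mem _ h1 (Submodule.add_mem _ h2 h3)
  obtain ⟨cg, hcgv, hcgrep⟩ := mem_MM_repr hmem
  refine ⟨L0, cg, hcgv, fun x => ?_⟩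
  rw [REP x, hcgrep x]

end FullSupport

section MainAux

lemma linear_functional_form {γ : Type*} [Fintype γ] [DecidableEq γ]
    (φ : (γ → ZMod 2) →ₗ[ZMod 2] ZMod 2) :
    ∃ s : Finset γ, ∀ x, φ x = ∑ b ∈ s, x b := by
  classical
  have h2cases : ∀ a : ZMod 2, a = 0 ∨ a = 1 := by decide
  refine ⟨Finset.univ.filter (fun b => φ (fun j' => if b = j' then 1 else 0) = 1), fun x => ?_⟩
  rw [LinearMap.pi_apply_eq_sum_univ φ x, Finset.sum_filter]
  refine Finset.sum_congr rfl fun b _ => ?_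
  rcases h2cases (φ (fun j' => if b = j' then 1 else 0)) with h | h
  · rw [h, if_neg (by decide : ¬ (0 : ZMod 2) = 1), smul_zero]
  · rw [h, if_pos rfl, smul_eq_mul, mul_one]

lemma insertNth_split {m : ℕ} (j : Fin (m + 1)) (b : ZMod 2) (y : Fin m → ZMod 2) :
    j.insertNth b y = Fin.insertNth (α := fun _ => ZMod 2) j b (fun _ => 0)
      + Fin.insertNth (α := fun _ => ZMod 2) j 0 y := by
  funext q
  refine Fin.succAboveCases j ?_ ?_ q
  · rw [Pi.add_apply, Fin.insertNth_apply_same, Fin.insertNth_apply_same,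
      Fin.insertNth_apply_same, add_zero]
  · intro p
    rw [Pi.add_apply, Fin.insertNth_apply_succAbove, Fin.insertNth_apply_succAbove,
      Fin.insertNth_apply_succAbove]
    show y p = 0 + y p
    rw [zero_add]

def insZeroLin {m : ℕ} (j : Fin (m + 1)) :
    (Fin m → ZMod 2) →ₗ[ZMod 2] (Fin (m + 1) → ZMod 2) where
  toFun y := Fin.insertNth (α := fun _ => ZMod 2) j 0 y
  map_add' u v := by
    funext q
    refine Fin.succAboveCases j ?_ ?_ q
    · simp [Fin.insertNth_apply_same]
    · intro p
      simp [Fin.insertNth_apply_succAbove]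
  map_smul' r u := by
    funext q
    refine Fin.succAboveCases j ?_ ?_ q
    · simp [Fin.insertNth_apply_same]
    · intro p
      simp [Fin.insertNth_apply_succAbove]

end MainAux

set_option maxHeartbeats 1000000 in
theorem affine_of_pinnings_affine' (n k : ℕ) (hk : 4 ≤ k)
    (f : (Fin (n + 1) → ZMod 2) → ℂ)
    (hsupp : HasAffineSupportDim f k)
    (hpin : ∀ (i : Fin (n + 1)) (b : ZMod 2),
      IsAffine fun y : Fin n → ZMod 2 => f (i.insertNth b y)) :
    IsAffine f := by
  classical
  obtain ⟨x₀, V, hdim, hset⟩ := hsupp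
  obtain ⟨m, rfl⟩ : ∃ m, k = m + 1 := ⟨k - 1, by omega⟩
  have hm : 3 ≤ m := by omega
  have hsupp_iff : ∀ x, f x ≠ 0 ↔ x + x₀ ∈ V := fun x => Set.ext_iff.mp hset x
  have add_self : ∀ v : Fin (n + 1) → ZMod 2, v + v = 0 := by
    intro v; funext i
    exact (by decide : ∀ a : ZMod 2, a + a = 0) (v i)
  -- basis of V
  let bV : Module.Basis (Fin (m + 1)) (ZMod 2) V :=
    (Module.finBasis (ZMod 2) V).reindex (finCongr hdim)
  -- columns
  let ccol : Fin (n + 1) → (Fin (m + 1) → ZMod 2) := fun i j => (bV j : Fin (n + 1) → ZMod 2) i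
  -- separation
  have hsep : ∀ ψ : (Fin (m + 1) → ZMod 2) →ₗ[ZMod 2] ZMod 2,
      (∀ i, ψ (ccol i) = 0) → ψ = 0 := by
    intro ψ hψ
    set tval : Fin (m + 1) → ZMod 2 := fun j => ψ (fun j' => if j = j' then 1 else 0)
      with htval
    have hψx : ∀ w, ψ w = ∑ j, w j * tval j := by
      intro w
      rw [LinearMap.pi_apply_eq_sum_univ ψ w]
      exact Finset.sum_congr rfl fun j _ => by rw [smul_eq_mul]
    have hcomb : (∑ j, tval j • bV j) = (0 : V) := by
      apply Subtype.ext
      funext i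
      have h1 : ((∑ j, tval j • bV j : V) : Fin (n + 1) → ZMod 2) i
          = ∑ j, tval j * ccol i j := by
        rw [Submodule.coe_sum]
        rw [Finset.sum_apply]
        refine Finset.sum_congr rfl fun j _ => ?_
        rw [Submodule.coe_smul, Pi.smul_apply, smul_eq_mul]
      rw [h1]
      have h2 : ∑ j, tval j * ccol i j = ψ (ccol i) := by
        rw [hψx (ccol i)]
        exact Finset.sum_congr rfl fun j _ => by ring
      rw [h2, hψ i]
      rfl
    have hzero : ∀ j, tval j = 0 :=
      Fintype.linearIndependent_iff.mp bV.linearIndependent tval hcomb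
    apply LinearMap.ext
    intro w
    rw [hψx w]
    simp [hzero]
  -- the columns span everything
  have hU : Submodule.span (ZMod 2) (Set.range ccol) = ⊤ := by
    by_contra hne
    have hex : ∃ v, v ∉ Submodule.span (ZMod 2) (Set.range ccol) := by
      by_contra hall
      push_neg at hall
      exact hne (Submodule.eq_top_iff'.mpr hall)
    obtain ⟨v, hv⟩ := hex
    set U := Submodule.span (ZMod 2) (Set.range ccol) with hUdef
    have hq : U.mkQ v ≠ 0 := by
      rw [Submodule.mkQ_apply]
      intro h
      exact hv ((Submodule.Quotient.mk_eq_zero U).mp h)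
    obtain ⟨φq, hφq⟩ : ∃ φ : Module.Dual (ZMod 2) ((Fin (m + 1) → ZMod 2) ⧸ U),
        φ (U.mkQ v) ≠ 0 := by
      by_contra hall
      push_neg at hall
      exact hq ((Module.forall_dual_apply_eq_zero_iff (ZMod 2) (U.mkQ v)).mp hall)
    have hψ0 : (φq.comp U.mkQ) = 0 := by
      apply hsep
      intro i
      have : ccol i ∈ U := Submodule.subset_span (Set.mem_range_self i)
      rw [LinearMap.comp_apply, Submodule.mkQ_apply,
        (Submodule.Quotient.mk_eq_zero U).mpr this, map_zero]
    exact hφq (by rw [← LinearMap.comp_apply, hψ0]; rfl)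
  -- select a linearly independent spanning subset of the columns
  obtain ⟨bset, hbsub, hbspan, hbind⟩ := exists_linearIndependent (ZMod 2) (Set.range ccol)
  rw [hU] at hbspan
  have hbfin : Fintype bset := (Set.toFinite bset).fintype
  let bb : Module.Basis bset (ZMod 2) (Fin (m + 1) → ZMod 2) :=
    Module.Basis.mk hbind (by rw [Subtype.range_coe, hbspan])
  have hcardb : Fintype.card bset = m + 1 := by
    have h1 := Module.finrank_eq_card_basis bb
    rw [Module.finrank_pi (ZMod 2), Fintype.card_fin] at h1
    omega
  have hchoice : ∀ w : bset, ∃ i, ccol i = (w : Fin (m + 1) → ZMod 2) := by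
    intro w
    obtain ⟨i, hi⟩ := Set.mem_range.mp (hbsub w.2)
    exact ⟨i, hi⟩
  choose idx hidx using hchoice
  let eqb : Fin (m + 1) ≃ bset := (Fintype.equivFinOfCardEq hcardb).symm
  let e : Fin (m + 1) → Fin (n + 1) := fun j => idx (eqb j)
  -- the coordinate projection on V
  let ρ : V →ₗ[ZMod 2] (Fin (m + 1) → ZMod 2) :=
    LinearMap.pi (fun j => (LinearMap.proj (e j)).comp V.subtype)
  have hρ_apply : ∀ (v : V) (j : Fin (m + 1)), ρ v j = (v : Fin (n + 1) → ZMod 2) (e j) :=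
    fun v j => rfl
  have hρ_inj : Function.Injective ρ := by
    rw [← LinearMap.ker_eq_bot]
    rw [Submodule.eq_bot_iff]
    intro v hv
    have hv' : ∀ j, (v : Fin (n + 1) → ZMod 2) (e j) = 0 := by
      intro j
      have := congrFun (LinearMap.mem_ker.mp hv) j
      rw [← hρ_apply v j, this]
      rfl
    set ψ : (Fin (m + 1) → ZMod 2) →ₗ[ZMod 2] ZMod 2 :=
      ∑ j, (bV.repr v) j • LinearMap.proj j with hψdef
    have hψ_apply : ∀ w, ψ w = ∑ j, (bV.repr v) j * w j := by
      intro w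
      rw [hψdef, LinearMap.sum_apply]
      exact Finset.sum_congr rfl fun j _ => by
        rw [LinearMap.smul_apply, LinearMap.proj_apply, smul_eq_mul]
    have hψccol : ∀ i, ψ (ccol i) = (v : Fin (n + 1) → ZMod 2) i := by
      intro i
      rw [hψ_apply]
      have h1 : ∑ j, (bV.repr v) j * ccol i j
          = ((∑ j, (bV.repr v) j • bV j : V) : Fin (n + 1) → ZMod 2) i := by
        rw [Submodule.coe_sum, Finset.sum_apply]
        refine Finset.sum_congr rfl fun j _ => ?_
        rw [Submodule.coe_smul, Pi.smul_apply, smul_eq_mul]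
      rw [h1, Module.Basis.sum_repr]
    have hψbset : ∀ w : Fin (m + 1) → ZMod 2, w ∈ bset → ψ w = 0 := by
      intro w hw
      have h1 : ccol (idx ⟨w, hw⟩) = w := hidx ⟨w, hw⟩
      have h2 : idx ⟨w, hw⟩ = e (eqb.symm ⟨w, hw⟩) := by
        show idx ⟨w, hw⟩ = idx (eqb (eqb.symm ⟨w, hw⟩))
        rw [Equiv.apply_symm_apply]
      have h4 := hψccol (idx ⟨w, hw⟩)
      rw [h1] at h4
      rw [h4, h2]
      exact hv' _
    have hψ0 : ψ = 0 := by
      have hle : Submodule.span (ZMod 2) bset ≤ LinearMap.ker ψ := by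
        rw [Submodule.span_le]
        intro w hw
        exact LinearMap.mem_ker.mpr (hψbset w hw)
      rw [hbspan] at hle
      exact LinearMap.ker_eq_top.mp (top_le_iff.mp hle)
    have hrepr0 : ∀ j, (bV.repr v) j = 0 := by
      intro j
      have := congrFun (congrArg (fun (φ : _ →ₗ[ZMod 2] ZMod 2) => φ.toFun) hψ0)
        (fun j' => if j = j' then 1 else 0)
      have h2 : ψ (fun j' => if j = j' then 1 else 0) = 0 := by
        rw [hψ0]; rfl
      rw [hψ_apply] at h2
      have h3 : ∑ j', (bV.repr v) j' * (if j = j' then (1 : ZMod 2) else 0)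
          = (bV.repr v) j := by
        rw [Finset.sum_eq_single j]
        · rw [if_pos rfl, mul_one]
        · intro j' _ hj'
          rw [if_neg (fun h => hj' (by rw [h])), mul_zero]
        · intro h; exact absurd (Finset.mem_univ j) h
      rw [h3] at h2
      exact h2
    have : v = (0 : V) := by
      have h4 := Module.Basis.sum_repr bV v
      rw [Finset.sum_eq_zero (fun j _ => by rw [hrepr0 j, zero_smul])] at h4
      exact h4.symm
    exact this
  have hfinrankV : Module.finrank (ZMod 2) V = m + 1 := hdim
  have hfinrank_eq : Module.finrank (ZMod 2) V
      = Module.finrank (ZMod 2) (Fin (m + 1) → ZMod 2) := by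
    rw [hfinrankV, Module.finrank_pi (ZMod 2), Fintype.card_fin]
  let ρe : V ≃ₗ[ZMod 2] (Fin (m + 1) → ZMod 2) :=
    LinearMap.linearEquivOfInjective ρ hρ_inj hfinrank_eq
  have hρe_apply : ∀ v : V, ρe v = ρ v :=
    fun v => LinearMap.linearEquivOfInjective_apply hρ_inj hfinrank_eq v
  -- the affine section
  let σ : (Fin (m + 1) → ZMod 2) → (Fin (n + 1) → ZMod 2) :=
    fun y => ((ρe.symm y : V) : Fin (n + 1) → ZMod 2) + x₀
  have hσ_mem : ∀ y, σ y + x₀ ∈ V := by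
    intro y
    have : σ y + x₀ = ((ρe.symm y : V) : Fin (n + 1) → ZMod 2) := by
      show ((ρe.symm y : V) : Fin (n + 1) → ZMod 2) + x₀ + x₀ = _
      rw [add_assoc, add_self, add_zero]
    rw [this]
    exact (ρe.symm y).2
  have hσ_coord : ∀ y j, σ y (e j) = y j + x₀ (e j) := by
    intro y j
    show ((ρe.symm y : V) : Fin (n + 1) → ZMod 2) (e j) + x₀ (e j) = y j + x₀ (e j)
    congr 1
    have h1 : ρ (ρe.symm y) j = ((ρe.symm y : V) : Fin (n + 1) → ZMod 2) (e j) :=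
      hρ_apply _ j
    rw [← h1, ← hρe_apply, LinearEquiv.apply_symm_apply]
  -- the reduced signature with full support
  let g : (Fin (m + 1) → ZMod 2) → ℂ := fun y => f (σ y)
  have hg : ∀ y, g y ≠ 0 := fun y => (hsupp_iff (σ y)).mpr (hσ_mem y)
  -- pinnings of g are affine
  have hpg : ∀ (j : Fin (m + 1)) (b : ZMod 2),
      IsAffine fun y' : Fin m → ZMod 2 => g (j.insertNth b y') := by
    intro j b
    set i : Fin (n + 1) := e j with hi
    set b' : ZMod 2 := b + x₀ (e j) with hb'
    set T : (Fin m → ZMod 2) → (Fin n → ZMod 2) :=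
      fun y' => i.removeNth (σ (j.insertNth b y')) with hT
    have hpoint : ∀ y', σ (j.insertNth b y') = i.insertNth b' (T y') := by
      intro y'
      have h1 := Fin.insertNth_self_removeNth i (σ (j.insertNth b y'))
      have h2 : σ (j.insertNth b y') i = b' := by
        rw [hi, hσ_coord, Fin.insertNth_apply_same, hb']
      rw [← h2, hT]
      exact h1.symm
    have hgeq : (fun y' : Fin m → ZMod 2 => g (j.insertNth b y'))
        = fun y' => (fun z => f (i.insertNth b' z)) (T y') := by
      funext y'
      show f (σ (j.insertNth b y')) = f (i.insertNth b' (T y'))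
      rw [hpoint y']
    rw [hgeq]
    refine IsAffine.comp_affine (hpin i b') T ?_
    intro a
    -- affine form of each coordinate of T
    have hdecomp : ∀ y', T y' a
        = ((ρe.symm (insZeroLin j y') : V) : Fin (n + 1) → ZMod 2) (i.succAbove a)
          + (((ρe.symm (Fin.insertNth (α := fun _ => ZMod 2) j b (fun _ => 0)) : V) :
                Fin (n + 1) → ZMod 2) (i.succAbove a)
            + x₀ (i.succAbove a)) := by
      intro y'
      show σ (j.insertNth b y') (i.succAbove a) = _
      have hsplit : j.insertNth b y'
          = Fin.insertNth (α := fun _ => ZMod 2) j b (fun _ => 0) + insZeroLin j y' :=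
        insertNth_split j b y'
      show ((ρe.symm (j.insertNth b y') : V) : Fin (n + 1) → ZMod 2) (i.succAbove a)
          + x₀ (i.succAbove a) = _
      rw [hsplit, map_add]
      rw [Submodule.coe_add, Pi.add_apply]
      ring
    set φ : (Fin m → ZMod 2) →ₗ[ZMod 2] ZMod 2 :=
      (LinearMap.proj (i.succAbove a)).comp
        ((V.subtype.comp ρe.symm.toLinearMap).comp (insZeroLin j)) with hφ
    obtain ⟨s, hs⟩ := linear_functional_form φ
    refine ⟨s, ((ρe.symm (Fin.insertNth (α := fun _ => ZMod 2) j b (fun _ => 0)) : V) :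
        Fin (n + 1) → ZMod 2) (i.succAbove a)
      + x₀ (i.succAbove a), fun y' => ?_⟩
    rw [hdecomp y', ← hs y']
    rfl
  -- apply the full-support lemma
  obtain ⟨lam, cg, hcgval, hrepg⟩ := fullSupport m hm g hg hpg
  -- the matrix cutting out the support
  let QS := (Fin (n + 1) → ZMod 2) ⧸ V
  let m2 := Module.finrank (ZMod 2) QS
  let bQ : Module.Basis (Fin m2) (ZMod 2) QS := Module.finBasis (ZMod 2) QS
  let Lmap : (Fin (n + 1) → ZMod 2) →ₗ[ZMod 2] (Fin m2 → ZMod 2) :=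
    (bQ.equivFun.toLinearMap).comp V.mkQ
  have hker : ∀ w, Lmap w = 0 ↔ w ∈ V := by
    intro w
    show bQ.equivFun (V.mkQ w) = 0 ↔ w ∈ V
    rw [LinearEquiv.map_eq_zero_iff, Submodule.mkQ_apply, Submodule.Quotient.mk_eq_zero]
  let A : Matrix (Fin m2) (Option (Fin (n + 1))) (ZMod 2) :=
    fun r o => Option.elim o (Lmap x₀ r) (fun i' => Lmap (fun j' => if i' = j' then 1 else 0) r)
  have hA : ∀ x, A.mulVec (extend1 x) = Lmap x + Lmap x₀ := by
    intro x
    funext r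
    show ∑ o : Option (Fin (n + 1)), A r o * extend1 x o = _
    rw [Fintype.sum_option]
    have h1 : Lmap x = ∑ i', x i' • Lmap (fun j' => if i' = j' then 1 else 0) :=
      LinearMap.pi_apply_eq_sum_univ Lmap x
    have h2 : Lmap x r = ∑ i', A r (some i') * x i' := by
      rw [h1, Finset.sum_apply]
      exact Finset.sum_congr rfl fun i' _ => by
        rw [Pi.smul_apply, smul_eq_mul]
        show x i' * Lmap _ r = A r (some i') * x i'
        rw [mul_comm]
        rfl
    rw [Pi.add_apply, h2]
    show A r none * extend1 x none + _ = _
    show Lmap x₀ r * 1 + _ = _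
    rw [mul_one]
    have hext : ∀ i', extend1 x (some i') = x i' := fun _ => rfl
    simp only [hext]
    exact add_comm _ _
  have hAzero : ∀ x, A.mulVec (extend1 x) = 0 ↔ x + x₀ ∈ V := by
    intro x
    rw [hA, ← map_add, hker]
  -- final coefficients
  let τ : (Fin (n + 1) → ZMod 2) → (Fin (m + 1) → ZMod 2) :=
    fun x j => x (e j) + x₀ (e j)
  have hτform : ∀ j, ∃ (s : Finset (Fin (n + 1))) (t : ZMod 2),
      ∀ x, τ x j = (∑ b ∈ s, x b) + t :=
    fun j => ⟨{e j}, x₀ (e j), fun x => by rw [Finset.sum_singleton]⟩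
  have hfg : ∀ x, x + x₀ ∈ V → f x = g (τ x) := by
    intro x hx
    have hτx : ρe ⟨x + x₀, hx⟩ = τ x := by
      funext j
      rw [hρe_apply]
      rfl
    have hστ : σ (τ x) = x := by
      show ((ρe.symm (τ x) : V) : Fin (n + 1) → ZMod 2) + x₀ = x
      rw [← hτx, LinearEquiv.symm_apply_apply]
      show (x + x₀) + x₀ = x
      rw [add_assoc, add_self, add_zero]
    show f x = f (σ (τ x))
    rw [hστ]
  have hmemf := comp_affine_mem cg hcgval τ hτform
  obtain ⟨cf, hcfval, hcfrep⟩ := mem_MM_repr hmemf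
  refine ⟨lam, m2, A, cf, hcfval.1, hcfval.2, fun x => ?_⟩
  by_cases hx : x + x₀ ∈ V
  · rw [if_pos ((hAzero x).mpr hx), mul_one, hfg x hx, hrepg (τ x)]
    have h2 := hcfrep x
    beta_reduce at h2
    rw [h2]
  · rw [if_neg (fun h => hx ((hAzero x).mp h))]
    have hfx : f x = 0 := by
      by_contra hne
      exact hx ((hsupp_iff x).mp hne)
    rw [hfx]
    ring

theorem affine_of_pinnings_affine (n k : ℕ) (hk : 4 ≤ k)
    (f : (Fin (n + 1) → ZMod 2) → ℂ)
    (hsupp : HasAffineSupportDim f k)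
    (hpin : ∀ (i : Fin (n + 1)) (b : ZMod 2),
      IsAffine fun y : Fin n → ZMod 2 => f (i.insertNth b y)) :
    IsAffine f :=
  affine_of_pinnings_affine' n k hk f hsupp hpin
end

section
/- Let S ⊆ ℤ₂ⁿ be an affine subspace of dimension k ≥ 2, and suppose no coordinate is constant on S, i.e., for every i ∈ {1,…,n} there exist u, v ∈ S with uᵢ ≠ vᵢ. Then there exists a free set X ⊆ {1,…,n} of size k that contains two consecutive indices j and j+1 for some j ∈ {1,…,n−1}. -/
/-- `S` is an affine subspace of `ℤ₂ⁿ` of dimension `k`. -/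
def IsAffineSubspaceDim {n : ℕ} (S : Set (Fin n → ZMod 2)) (k : ℕ) : Prop :=
  ∃ (x₀ : Fin n → ZMod 2) (V : Submodule (ZMod 2) (Fin n → ZMod 2)),
    Module.finrank (ZMod 2) ↥V = k ∧ S = {x | x + x₀ ∈ V}

/-- `X` is a set of free variables for `S`: the projection of `S` onto the
coordinates in `X` is a bijection onto `{0,1}^X`. -/
def IsFreeSet {n : ℕ} (S : Set (Fin n → ZMod 2)) (X : Finset (Fin n)) : Prop :=
  Set.BijOn (fun (x : Fin n → ZMod 2) => (fun i : {i // i ∈ X} => x i.1)) S Set.univ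

lemma zmod2_add_self (a : ZMod 2) : a + a = 0 := by revert a; decide

lemma zmod2_cases (a : ZMod 2) : a = 0 ∨ a = 1 := by revert a; decide

set_option maxHeartbeats 2000000 in
theorem free_set_with_consecutive_pair (n k : ℕ) (hk : 2 ≤ k)
    (S : Set (Fin n → ZMod 2)) (hS : IsAffineSubspaceDim S k)
    (hnc : ∀ i : Fin n, ∃ u ∈ S, ∃ v ∈ S, u i ≠ v i) :
    ∃ X : Finset (Fin n), X.card = k ∧ IsFreeSet S X ∧
      ∃ j j' : Fin n, j ∈ X ∧ j' ∈ X ∧ (j' : ℕ) = (j : ℕ) + 1 := by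
  classical
  obtain ⟨x₀, V, hdim, hSeq⟩ := hS
  -- the coordinate functionals on V
  set f : Fin n → Module.Dual (ZMod 2) V :=
    fun i => (LinearMap.proj i).comp V.subtype with hf
  -- each coordinate functional is nonzero
  have hf0 : ∀ i, f i ≠ 0 := by
    intro i h
    obtain ⟨u, hu, v, hv, huv⟩ := hnc i
    rw [hSeq] at hu hv
    have hw : (u + x₀) + (v + x₀) ∈ V := V.add_mem hu hv
    have hww : (u + x₀) + (v + x₀) = u + v := by
      funext t
      show (u t + x₀ t) + (v t + x₀ t) = u t + v t
      rw [add_add_add_comm, zmod2_add_self, add_zero]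
    rw [hww] at hw
    have : f i ⟨u + v, hw⟩ = 0 := by rw [h]; rfl
    have huvi : u i + v i = 0 := this
    apply huv
    rcases zmod2_cases (u i) with h1 | h1 <;> rcases zmod2_cases (v i) with h2 | h2 <;>
      simp [h1, h2] at huvi ⊢
  -- the coordinate functionals span the dual of V
  have hspan : Submodule.span (ZMod 2) (Set.range f) = ⊤ := by
    have hsurj : Function.Surjective (V.subtype.dualMap) :=
      LinearMap.dualMap_surjective_of_injective V.injective_subtype
    rw [eq_top_iff]
    intro φ _
    obtain ⟨ψ, hψ⟩ := hsurj φ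
    have hψmem : ψ ∈ Submodule.span (ZMod 2)
        (Set.range fun i : Fin n => (LinearMap.proj i : (Fin n → ZMod 2) →ₗ[ZMod 2] ZMod 2)) := by
      have : ψ ∈ Submodule.span (ZMod 2)
          (Set.range ((Pi.basisFun (ZMod 2) (Fin n)).dualBasis)) := by
        rw [Module.Basis.span_eq]; trivial
      convert this using 3
      funext i
      apply LinearMap.ext
      intro x
      simp [Module.Basis.dualBasis_apply, Pi.basisFun_repr, Module.Basis.coord_apply]
    have := Submodule.apply_mem_span_image_of_mem_span (V.subtype.dualMap) hψmem
    rw [← Set.range_comp] at this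
    have heq : (V.subtype.dualMap ∘ fun i : Fin n =>
        (LinearMap.proj i : (Fin n → ZMod 2) →ₗ[ZMod 2] ZMod 2)) = f := by
      funext i; rfl
    rw [heq, hψ] at this
    exact this
  haveI : FiniteDimensional (ZMod 2) V := inferInstance
  -- finrank of dual is k
  have hdualrank : Module.finrank (ZMod 2) (Module.Dual (ZMod 2) V) = k := by
    rw [Subspace.dual_finrank_eq, hdim]
  -- there exist consecutive indices with distinct functionals
  have hcons : ∃ j j' : Fin n, (j' : ℕ) = (j : ℕ) + 1 ∧ f j ≠ f j' := by
    by_contra hno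
    push_neg at hno
    have hn : 2 ≤ n := by
      have := V.finrank_le
      simp only [Module.finrank_pi, Fintype.card_fin, hdim] at this
      omega
    have hz : (0 : ℕ) < n := by omega
    have hall : ∀ m (h : m < n), f ⟨m, h⟩ = f ⟨0, hz⟩ := by
      intro m
      induction m with
      | zero => intro h; rfl
      | succ p ih =>
        intro h
        have hp : p < n := by omega
        have heq := hno ⟨p, hp⟩ ⟨p + 1, h⟩ rfl
        rw [← heq]; exact ih hp
    have hrange : Set.range f ⊆ {f ⟨0, hz⟩} := by
      rintro φ ⟨i, rfl⟩
      exact hall i.1 i.2 ▸ rfl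
    have hle : (⊤ : Submodule (ZMod 2) (Module.Dual (ZMod 2) V)) ≤
        Submodule.span (ZMod 2) {f ⟨0, hz⟩} := by
      rw [← hspan]; exact Submodule.span_mono hrange
    have h1 : Module.finrank (ZMod 2) (Module.Dual (ZMod 2) V) ≤ 1 := by
      have h2 := Submodule.finrank_mono hle
      have h3 : Module.finrank (ZMod 2)
          (Submodule.span (ZMod 2) ({f ⟨0, hz⟩} : Set (Module.Dual (ZMod 2) V))) ≤ 1 := by
        simpa using finrank_span_le_card ({f ⟨0, hz⟩} : Set (Module.Dual (ZMod 2) V))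
      rw [finrank_top] at h2
      exact le_trans h2 h3
    omega
  obtain ⟨j, j', hjj', hfne⟩ := hcons
  -- {f j, f j'} is linearly independent
  have hjne : j ≠ j' := fun h => hfne (h ▸ rfl)
  have hpair : LinearIndependent (ZMod 2)
      (fun x => x : ({f j, f j'} : Set (Module.Dual (ZMod 2) V)) → Module.Dual (ZMod 2) V) := by
    rw [show ({f j, f j'} : Set (Module.Dual (ZMod 2) V)) = insert (f j) {f j'} from rfl]
    change LinearIndepOn (ZMod 2) id (insert (f j) {f j'})
    rw [linearIndepOn_id_insert (by simp [hfne])]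
    refine ⟨(linearIndepOn_singleton_iff (ZMod 2)).2 (hf0 j'), ?_⟩
    intro hmem
    rw [Submodule.mem_span_singleton] at hmem
    obtain ⟨a, ha⟩ := hmem
    rcases zmod2_cases a with h | h <;> rw [h] at ha
    · simp at ha; exact hf0 j ha.symm
    · rw [one_smul] at ha; exact hfne ha.symm
  have hst : ({f j, f j'} : Set (Module.Dual (ZMod 2) V)) ⊆ Set.range f := by
    rintro φ (rfl | rfl) <;> exact Set.mem_range_self _
  -- extend to a basis inside the range of f
  set b := LinearIndepOn.extend (v := id) hpair hst with hb
  have hbsub : b ⊆ Set.range f := LinearIndepOn.extend_subset (v := id) hpair hst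
  have hbspan : Submodule.span (ZMod 2) b = ⊤ := by
    rw [LinearIndepOn.span_extend_eq_span hpair hst, hspan]
  have hbli : LinearIndependent (ZMod 2) ((↑) : b → Module.Dual (ZMod 2) V) :=
    LinearIndepOn.linearIndepOn_extend (v := id) hpair hst
  have hbs : ({f j, f j'} : Set (Module.Dual (ZMod 2) V)) ⊆ b := LinearIndepOn.subset_extend (v := id) hpair hst
  have hbfin : b.Finite := hbli.setFinite
  haveI : Fintype b := hbfin.fintype
  -- basis of the dual
  let B : Module.Basis b (ZMod 2) (Module.Dual (ZMod 2) V) :=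
    Module.Basis.mk hbli (by rw [← hbspan]; exact le_of_eq (by rw [Subtype.range_coe]))
  have hbcard : hbfin.toFinset.card = k := by
    have := Module.finrank_eq_card_basis B
    rw [hdualrank] at this
    rw [← Set.toFinset_card] at this
    simpa using this.symm
  -- choose indices for the basis functionals
  let g : Module.Dual (ZMod 2) V → Fin n := fun φ =>
    if φ = f j then j else if φ = f j' then j'
    else if h : ∃ i, f i = φ then h.choose else j
  have hgj : g (f j) = j := by simp [g]
  have hgj' : g (f j') = j' := by
    have hne' : ¬ f j' = f j := fun h => hfne h.symm
    simp [g, hne']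
  have hg : ∀ φ ∈ b, f (g φ) = φ := by
    intro φ hφ
    by_cases h1 : φ = f j
    · rw [h1, hgj]
    by_cases h2 : φ = f j'
    · rw [h2, hgj']
    have hex : ∃ i, f i = φ := hbsub hφ
    simp only [g, if_neg h1, if_neg h2, dif_pos hex]
    exact hex.choose_spec
  have hginj : Set.InjOn g b := by
    intro φ₁ h1 φ₂ h2 hgg
    rw [← hg φ₁ h1, ← hg φ₂ h2, hgg]
  -- the free set
  set X : Finset (Fin n) := hbfin.toFinset.image g with hX
  have hXcard : X.card = k := by
    rw [hX, Finset.card_image_of_injOn (by intro a ha c hc; exact hginj (by simpa using ha) (by simpa using hc)), hbcard]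
  have hmemX : ∀ i : Fin n, i ∈ X ↔ ∃ φ ∈ b, g φ = i := by
    intro i; simp [hX, Set.Finite.mem_toFinset]
  have hjX : j ∈ X := (hmemX j).2 ⟨f j, hbs (Set.mem_insert _ _), hgj⟩
  have hj'X : j' ∈ X := (hmemX j').2 ⟨f j', hbs (Set.mem_insert_of_mem _ rfl), hgj'⟩
  -- the coordinate projection map on V, restricted to X
  let L : V →ₗ[ZMod 2] ({i // i ∈ X} → ZMod 2) := LinearMap.pi (fun i => f i.1)
  have hLinj : Function.Injective L := by
    rw [← LinearMap.ker_eq_bot, Submodule.eq_bot_iff]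
    intro v hv
    rw [LinearMap.mem_ker] at hv
    have hvanish : ∀ φ ∈ b, φ v = 0 := by
      intro φ hφ
      obtain ⟨ψ, hψb, hψ⟩ := (hmemX (g φ)).1 ((hmemX (g φ)).2 ⟨φ, hφ, rfl⟩)
      have : L v ⟨g φ, (hmemX (g φ)).2 ⟨φ, hφ, rfl⟩⟩ = 0 := by rw [hv]; rfl
      have : f (g φ) v = 0 := this
      rwa [hg φ hφ] at this
    have hall : ∀ φ : Module.Dual (ZMod 2) V, φ v = 0 := by
      intro φ
      have hφtop : φ ∈ Submodule.span (ZMod 2) b := by rw [hbspan]; trivial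
      induction hφtop using Submodule.span_induction with
      | mem ψ hψ => exact hvanish ψ hψ
      | zero => rfl
      | add ψ χ _ _ h1 h2 => simp [LinearMap.add_apply, h1, h2]
      | smul a ψ _ h1 => simp [LinearMap.smul_apply, h1]
    exact (Module.forall_dual_apply_eq_zero_iff (ZMod 2) v).1 hall
  have hLsurj : Function.Surjective L := by
    have hrank : Module.finrank (ZMod 2) (LinearMap.range L) =
        Module.finrank (ZMod 2) ({i // i ∈ X} → ZMod 2) := by
      rw [LinearMap.finrank_range_of_inj hLinj, hdim, Module.finrank_pi]
      simp [Fintype.card_coe, hXcard]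
    have := Submodule.eq_top_of_finrank_eq hrank
    rw [← LinearMap.range_eq_top]; exact this
  refine ⟨X, hXcard, ?_, j, j', hjX, hj'X, hjj'⟩
  -- prove IsFreeSet
  constructor
  · intro x _; trivial
  constructor
  · intro x hx y hy hxy
    rw [hSeq] at hx hy
    have : L ⟨x + x₀, hx⟩ = L ⟨y + x₀, hy⟩ := by
      funext i
      show (x + x₀) i.1 = (y + x₀) i.1
      show x i.1 + x₀ i.1 = y i.1 + x₀ i.1
      have : x i.1 = y i.1 := congrFun hxy i
      rw [this]
    have := hLinj this
    have hxy0 : x + x₀ = y + x₀ := congrArg Subtype.val this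
    funext i
    have := congrFun hxy0 i
    have h1 : x i + x₀ i = y i + x₀ i := this
    exact add_right_cancel h1
  · intro c _
    obtain ⟨v, hv⟩ := hLsurj (fun i => c i + x₀ i.1)
    refine ⟨v.1 + x₀, ?_, ?_⟩
    · rw [hSeq]
      show v.1 + x₀ + x₀ ∈ V
      have : v.1 + x₀ + x₀ = v.1 := by
        funext t
        show v.1 t + x₀ t + x₀ t = v.1 t
        rw [add_assoc, zmod2_add_self, add_zero]
      rw [this]; exact v.2
    · funext i
      show v.1 i.1 + x₀ i.1 = c i
      have : L v i = c i + x₀ i.1 := congrFun hv i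
      have hvi : v.1 i.1 = c i + x₀ i.1 := this
      rw [hvi, add_assoc, zmod2_add_self, add_zero]
end
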